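/- Let A be the adjacency matrix of WS(n,k,β) with identity permutation. Then with probability at least 1 - 1/n, ⟨B, A⟩ ≥ (1 - β + β²k/(n-1))·nk - √(nk·log n). -/

import Mathlib

open MeasureTheory ProbabilityTheory Real

/-- Ring distance between two nodes on the cycle `Z/nZ`. -/
def ringDist (n : ℕ) (i j : Fin n) : ℕ :=
  min ((i.val + n - j.val) % n) ((j.val + n - i.val) % n)

/-- Adjacency matrix of the ring lattice on `n` nodes with neighborhood size `k`. -/
def ringLattice (n k : ℕ) : Matrix (Fin n) (Fin n) ℝ :=
  Matrix.of fun i j => if 1 ≤ ringDist n i j ∧ ringDist n i j ≤ k / 2 then 1 else 0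


section Aux
open Finset

lemma bern_mgf_le (p : ℝ) (hp0 : 0 ≤ p) (hp1 : p ≤ 1) (t : ℝ) :
    1 - p + p * exp t ≤ exp (p * t + t ^ 2 / 8) := by
  set D : ℝ → ℝ := fun s => 1 - p + p * exp s with hD
  have hDpos : ∀ s, 0 < D s := by
    intro s
    rcases lt_or_eq_of_le hp1 with h | h
    · have : 0 < 1 - p := by linarith
      have : 0 ≤ p * exp s := mul_nonneg hp0 (exp_pos s).le
      simp only [hD]; linarith
    · simp only [hD, ← h]
      have := exp_pos s
      nlinarith
  set f : ℝ → ℝ := fun s => p * s + s ^ 2 / 8 - Real.log (D s) with hf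
  set f' : ℝ → ℝ := fun s => p + s / 4 - p * exp s / D s with hf'
  have hderiv : ∀ s, HasDerivAt f (f' s) s := by
    intro s
    have hD' : HasDerivAt D (p * exp s) s := by
      exact ((Real.hasDerivAt_exp s).const_mul p).const_add (1 - p)
    have hlog : HasDerivAt (fun s => Real.log (D s)) (p * exp s / D s) s :=
      hD'.log (hDpos s).ne'
    have h1 : HasDerivAt (fun s => p * s + s ^ 2 / 8) (p + 2 * s / 8) s := by
      exact (((hasDerivAt_id' s).const_mul p).fun_add ((hasDerivAt_pow 2 s).div_const 8)).congr_deriv (by norm_num)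
    have := h1.fun_sub hlog
    exact this.congr_deriv (by rw [hf']; ring)
  have hderiv' : ∀ s, HasDerivAt f' (1 / 4 - (p * exp s * D s - p * exp s * (p * exp s)) / D s ^ 2) s := by
    intro s
    have hD' : HasDerivAt D (p * exp s) s := by
      exact ((Real.hasDerivAt_exp s).const_mul p).const_add (1 - p)
    have hnum : HasDerivAt (fun s => p * exp s) (p * exp s) s :=
      (Real.hasDerivAt_exp s).const_mul p
    have hq : HasDerivAt (fun s => p * exp s / D s)
        ((p * exp s * D s - p * exp s * (p * exp s)) / D s ^ 2) s :=
      hnum.div hD' (hDpos s).ne'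
    have h1 : HasDerivAt (fun s => p + s / 4) (1 / 4) s := by
      simpa using ((hasDerivAt_id s).div_const 4).const_add p
    exact h1.sub hq
  have hsecond_nonneg : ∀ s, 0 ≤ 1 / 4 - (p * exp s * D s - p * exp s * (p * exp s)) / D s ^ 2 := by
    intro s
    have hpos := hDpos s
    rw [sub_nonneg, div_le_iff₀ (by positivity)]
    have key : 4 * (p * exp s * (1 - p)) ≤ ((1 - p) + p * exp s) ^ 2 := by
      nlinarith [sq_nonneg ((1 - p) - p * exp s)]
    have hDval : D s = 1 - p + p * exp s := rfl
    nlinarith [key]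
  have hf'0 : f' 0 = 0 := by
    simp only [hf', hD]
    norm_num
  have hf'mono : Monotone f' :=
    monotone_of_deriv_nonneg (fun s => (hderiv' s).differentiableAt)
      (fun s => by rw [(hderiv' s).deriv]; exact hsecond_nonneg s)
  have hf0 : f 0 = 0 := by
    simp only [hf, hD]
    norm_num
  have hdiff : Differentiable ℝ f := fun s => (hderiv s).differentiableAt
  have hderiv_eq : deriv f = f' := funext fun s => (hderiv s).deriv
  have hfnonneg : ∀ s, 0 ≤ f s := by
    intro s
    rcases le_total 0 s with h | h
    · have hm : MonotoneOn f (Set.Ici 0) := by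
        refine monotoneOn_of_deriv_nonneg (convex_Ici 0) hdiff.continuous.continuousOn
          (hdiff.differentiableOn) ?_
        intro x hx
        rw [hderiv_eq]
        rw [interior_Ici] at hx
        rw [← hf'0]
        exact hf'mono (le_of_lt hx)
      have := hm (Set.self_mem_Ici) h h
      rw [hf0] at this
      exact this
    · have hm : AntitoneOn f (Set.Iic 0) := by
        refine antitoneOn_of_deriv_nonpos (convex_Iic 0) hdiff.continuous.continuousOn
          (hdiff.differentiableOn) ?_
        intro x hx
        rw [hderiv_eq]
        rw [interior_Iic] at hx
        rw [← hf'0]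
        exact hf'mono (le_of_lt hx)
      have := hm h (Set.self_mem_Iic) h
      rw [hf0] at this
      exact this
  have := hfnonneg t
  have hlog_le : Real.log (D t) ≤ p * t + t ^ 2 / 8 := by
    simp only [hf] at this; linarith
  calc D t = exp (Real.log (D t)) := (exp_log (hDpos t)).symm
    _ ≤ exp (p * t + t ^ 2 / 8) := exp_le_exp.mpr hlog_le


lemma mod_two_cases (x n : ℕ) (hn : 0 < n) (h : x < 2 * n) :
    (x < n ∧ x % n = x) ∨ (n ≤ x ∧ x % n = x - n) := by
  rcases lt_or_ge x n with h1 | h1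
  · exact Or.inl ⟨h1, Nat.mod_eq_of_lt h1⟩
  · refine Or.inr ⟨h1, ?_⟩
    rw [Nat.mod_eq_sub_mod h1, Nat.mod_eq_of_lt (by omega)]

lemma ringDist_self (n : ℕ) (i : Fin n) : ringDist n i i = 0 := by
  have : i.val + n - i.val = n := by omega
  simp [ringDist, this]

lemma ringDist_comm (n : ℕ) (i j : Fin n) : ringDist n i j = ringDist n j i :=
  min_comm _ _

lemma ring_row_card (n k : ℕ) (hn : 2 ≤ n) (hkn : k < n) (hke : Even k) (i : Fin n) :
    (Finset.univ.filter fun j : Fin n =>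
      1 ≤ ringDist n i j ∧ ringDist n i j ≤ k / 2).card = k := by
  classical
  have hn0 : 0 < n := by omega
  have hk2 : k % 2 = 0 := Nat.even_iff.mp hke
  set a := i.val with ha
  have hav : a < n := i.isLt
  set D : ℕ → ℕ := fun b => min ((a + n - b) % n) ((b + n - a) % n) with hD
  -- step 1 : reduce to range n
  have step1 : (Finset.univ.filter fun j : Fin n =>
      1 ≤ ringDist n i j ∧ ringDist n i j ≤ k / 2).card
      = ((range n).filter fun b => 1 ≤ D b ∧ D b ≤ k / 2).card := by
    rw [Finset.card_filter, Finset.card_filter,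
      ← Fin.sum_univ_eq_sum_range (fun b => if 1 ≤ D b ∧ D b ≤ k / 2 then 1 else 0) n]
    rfl
  -- step 2 : distance in terms of offset
  have dist_eq : ∀ b < n, D b = min (n - (b + n - a) % n) ((b + n - a) % n) := by
    intro b hb
    have h1 := mod_two_cases (a + n - b) n hn0 (by omega)
    have h2 := mod_two_cases (b + n - a) n hn0 (by omega)
    simp only [hD]
    omega
  -- step 3 : bijection with offsets
  have step3 : ((range n).filter fun b => 1 ≤ D b ∧ D b ≤ k / 2).card =
      ((range n).filter fun o => 1 ≤ min (n - o) o ∧ min (n - o) o ≤ k / 2).card := by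
    apply Finset.card_nbij' (i := fun b => (b + n - a) % n) (j := fun o => (o + a) % n)
    · intro b hb
      simp only [Finset.mem_coe, mem_filter, mem_range] at hb ⊢
      obtain ⟨hb1, hb2⟩ := hb
      rw [dist_eq b hb1] at hb2
      exact ⟨Nat.mod_lt _ hn0, (by omega), (by omega)⟩
    · intro o ho
      simp only [Finset.mem_coe, mem_filter, mem_range] at ho ⊢
      obtain ⟨ho1, ho2⟩ := ho
      have hmod : (o + a) % n < n := Nat.mod_lt _ hn0
      refine ⟨hmod, ?_⟩
      have key : ((o + a) % n + n - a) % n = o := by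
        have h1 := mod_two_cases (o + a) n hn0 (by omega)
        have h2 := mod_two_cases ((o + a) % n + n - a) n hn0 (by omega)
        omega
      rw [dist_eq _ hmod, key]
      omega
    · intro b hb
      simp only [Finset.mem_coe, mem_filter, mem_range] at hb
      have h1 := mod_two_cases (b + n - a) n hn0 (by omega)
      have h2 := mod_two_cases ((b + n - a) % n + a) n hn0 (by omega)
      dsimp only
      omega
    · intro o ho
      simp only [Finset.mem_coe, mem_filter, mem_range] at ho
      have h1 := mod_two_cases (o + a) n hn0 (by omega)
      have h2 := mod_two_cases ((o + a) % n + n - a) n hn0 (by omega)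
      dsimp only
      omega
  -- step 4 : count T
  have step4 : ((range n).filter fun o => 1 ≤ min (n - o) o ∧ min (n - o) o ≤ k / 2)
      = Ico 1 (k / 2 + 1) ∪ Ico (n - k / 2) n := by
    ext o
    simp only [mem_filter, mem_range, mem_union, mem_Ico]
    omega
  have step5 : ((range n).filter fun o =>
      1 ≤ min (n - o) o ∧ min (n - o) o ≤ k / 2).card = k := by
    rw [step4, Finset.card_union_of_disjoint, Nat.card_Ico, Nat.card_Ico]
    · omega
    · rw [Finset.disjoint_left]
      intro o ho1 ho2
      simp only [mem_Ico] at ho1 ho2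
      omega
  rw [step1, step3, step5]

section Pairs
variable (n k : ℕ)

/-- unordered lattice edges as subtype index set -/
noncomputable def latticeEdges : Finset {q : Fin n × Fin n // q.1 < q.2} :=
  Finset.univ.filter fun e => 1 ≤ ringDist n e.1.1 e.1.2 ∧ ringDist n e.1.1 e.1.2 ≤ k / 2

lemma two_mul_latticeEdges_card (hn : 2 ≤ n) (hkn : k < n) (hke : Even k) :
    2 * (latticeEdges n k).card = n * k := by
  classical
  set cond : Fin n × Fin n → Prop :=
    fun q => 1 ≤ ringDist n q.1 q.2 ∧ ringDist n q.1 q.2 ≤ k / 2 with hcond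
  have hdec : DecidablePred cond := fun q => instDecidableAnd
  set T : Finset (Fin n × Fin n) := Finset.univ.filter cond with hT
  set T₁ : Finset (Fin n × Fin n) := Finset.univ.filter (fun q => q.1 < q.2 ∧ cond q) with hT₁
  set T₂ : Finset (Fin n × Fin n) := Finset.univ.filter (fun q => q.2 < q.1 ∧ cond q) with hT₂
  have hTcard : T.card = n * k := by
    rw [hT, Finset.card_filter, Fintype.sum_prod_type]
    have hrow : ∀ i : Fin n, (∑ j : Fin n, if cond (i, j) then 1 else 0) = k := by
      intro i
      rw [← ring_row_card n k hn hkn hke i, Finset.card_filter]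
      apply Finset.sum_congr rfl
      intro j _
      simp only [hcond]
    rw [Finset.sum_congr rfl fun i _ => hrow i]
    simp [Finset.card_univ, mul_comm]
  have hunion : T = T₁ ∪ T₂ := by
    ext q
    simp only [hT, hT₁, hT₂, Finset.mem_filter, Finset.mem_union, Finset.mem_univ, true_and]
    constructor
    · intro h
      rcases lt_trichotomy q.1 q.2 with hlt | heq | hgt
      · exact Or.inl ⟨hlt, h⟩
      · exfalso
        have : ringDist n q.1 q.2 = 0 := by
          rw [show q.2 = q.1 from heq.symm]
          exact ringDist_self n q.1
        simp only [hcond] at h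
        omega
      · exact Or.inr ⟨hgt, h⟩
    · rintro (⟨_, h⟩ | ⟨_, h⟩) <;> exact h
  have hdisj : Disjoint T₁ T₂ := by
    rw [Finset.disjoint_left]
    intro q h1 h2
    simp only [hT₁, hT₂, Finset.mem_filter] at h1 h2
    exact absurd (h1.2.1.trans h2.2.1) (lt_irrefl _)
  have hswap : T₁.card = T₂.card := by
    apply Finset.card_nbij' (i := Prod.swap) (j := Prod.swap)
    · intro q hq
      simp only [Finset.mem_coe, hT₁, hT₂, Finset.mem_filter, Finset.mem_univ, true_and, Prod.fst_swap,
        Prod.snd_swap, hcond] at hq ⊢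
      rw [ringDist_comm]
      exact ⟨hq.1, hq.2⟩
    · intro q hq
      simp only [Finset.mem_coe, hT₁, hT₂, Finset.mem_filter, Finset.mem_univ, true_and, Prod.fst_swap,
        Prod.snd_swap, hcond] at hq ⊢
      rw [ringDist_comm]
      exact ⟨hq.1, hq.2⟩
    · intro q _; simp
    · intro q _; simp
  have hE : (latticeEdges n k).card = T₁.card := by
    apply Finset.card_bij (i := fun e _ => e.1)
    · intro e he
      simp only [latticeEdges, Finset.mem_filter, Finset.mem_univ, true_and] at he
      simp only [hT₁, Finset.mem_filter, Finset.mem_univ, true_and, hcond]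
      exact ⟨e.2, he⟩
    · intro e₁ _ e₂ _ h
      exact Subtype.ext h
    · intro q hq
      simp only [hT₁, Finset.mem_filter, Finset.mem_univ, true_and, hcond] at hq
      refine ⟨⟨q, hq.1⟩, ?_, rfl⟩
      simp only [latticeEdges, Finset.mem_filter, Finset.mem_univ, true_and]
      exact hq.2
  have := Finset.card_union_of_disjoint hdisj
  rw [← hunion] at this
  omega

lemma sum_lattice_eq (hn : 2 ≤ n) (hkn : k < n) (A : Matrix (Fin n) (Fin n) ℝ)
    (hA : A.IsSymm) :
    ∑ i : Fin n, ∑ j : Fin n, ringLattice n k i j * A i j =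
      2 * ∑ e ∈ latticeEdges n k, A e.1.1 e.1.2 := by
  classical
  set cond : Fin n × Fin n → Prop :=
    fun q => 1 ≤ ringDist n q.1 q.2 ∧ ringDist n q.1 q.2 ≤ k / 2 with hcond
  set T : Finset (Fin n × Fin n) := Finset.univ.filter cond with hT
  set T₁ : Finset (Fin n × Fin n) := Finset.univ.filter (fun q => q.1 < q.2 ∧ cond q) with hT₁
  set T₂ : Finset (Fin n × Fin n) := Finset.univ.filter (fun q => q.2 < q.1 ∧ cond q) with hT₂
  have step1 : ∑ i : Fin n, ∑ j : Fin n, ringLattice n k i j * A i j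
      = ∑ q ∈ T, A q.1 q.2 := by
    have hps := Fintype.sum_prod_type
      (f := fun q : Fin n × Fin n => ringLattice n k q.1 q.2 * A q.1 q.2)
    rw [← hps, hT, Finset.sum_filter]
    apply Finset.sum_congr rfl
    intro q _
    by_cases h : cond q
    · simp only [hcond] at h
      simp [ringLattice, h, hcond]
    · simp only [hcond] at h
      simp [ringLattice, h, hcond]
  have hunion : T = T₁ ∪ T₂ := by
    ext q
    simp only [hT, hT₁, hT₂, Finset.mem_filter, Finset.mem_union, Finset.mem_univ, true_and]
    constructor
    · intro h
      rcases lt_trichotomy q.1 q.2 with hlt | heq | hgt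
      · exact Or.inl ⟨hlt, h⟩
      · exfalso
        have : ringDist n q.1 q.2 = 0 := by
          rw [show q.2 = q.1 from heq.symm]
          exact ringDist_self n q.1
        simp only [hcond] at h
        omega
      · exact Or.inr ⟨hgt, h⟩
    · rintro (⟨_, h⟩ | ⟨_, h⟩) <;> exact h
  have hdisj : Disjoint T₁ T₂ := by
    rw [Finset.disjoint_left]
    intro q h1 h2
    simp only [hT₁, hT₂, Finset.mem_filter] at h1 h2
    exact absurd (h1.2.1.trans h2.2.1) (lt_irrefl _)
  have step2 : ∑ q ∈ T, A q.1 q.2 = ∑ q ∈ T₁, A q.1 q.2 + ∑ q ∈ T₂, A q.1 q.2 := by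
    rw [hunion, Finset.sum_union hdisj]
  have step3 : ∑ q ∈ T₂, A q.1 q.2 = ∑ q ∈ T₁, A q.1 q.2 := by
    apply Finset.sum_nbij' (i := Prod.swap) (j := Prod.swap)
    · intro q hq
      simp only [hT₁, hT₂, Finset.mem_filter, Finset.mem_univ, true_and, Prod.fst_swap,
        Prod.snd_swap, hcond] at hq ⊢
      rw [ringDist_comm]
      exact ⟨hq.1, hq.2⟩
    · intro q hq
      simp only [hT₁, hT₂, Finset.mem_filter, Finset.mem_univ, true_and, Prod.fst_swap,
        Prod.snd_swap, hcond] at hq ⊢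
      rw [ringDist_comm]
      exact ⟨hq.1, hq.2⟩
    · intro q _; simp
    · intro q _; simp
    · intro q _
      simp only [Prod.fst_swap, Prod.snd_swap]
      exact (hA.apply q.1 q.2).symm
  have step4 : ∑ e ∈ latticeEdges n k, A e.1.1 e.1.2 = ∑ q ∈ T₁, A q.1 q.2 := by
    apply Finset.sum_bij (i := fun e _ => e.1)
    · intro e he
      simp only [latticeEdges, Finset.mem_filter, Finset.mem_univ, true_and] at he
      simp only [hT₁, Finset.mem_filter, Finset.mem_univ, true_and, hcond]
      exact ⟨e.2, he⟩
    · intro e₁ _ e₂ _ h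
      exact Subtype.ext h
    · intro q hq
      simp only [hT₁, Finset.mem_filter, Finset.mem_univ, true_and, hcond] at hq
      refine ⟨⟨q, hq.1⟩, ?_, rfl⟩
      simp only [latticeEdges, Finset.mem_filter, Finset.mem_univ, true_and]
      exact hq.2
    · intro e _
      rfl
  rw [step1, step2, step3, ← step4]
  ring

end Pairs


lemma bernoulli_mgf {Ω : Type*} [MeasurableSpace Ω] (μ : Measure Ω) [IsProbabilityMeasure μ]
    (X : Ω → ℝ) (hX : Measurable X) (h01 : ∀ ω, X ω = 0 ∨ X ω = 1)
    (p : ℝ) (hp0 : 0 ≤ p) (hp : μ {ω | X ω = 1} = ENNReal.ofReal p) (t : ℝ) :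
    Integrable (fun ω => exp (t * X ω)) μ ∧ mgf X μ t = 1 - p + p * exp t := by
  have hs : MeasurableSet {ω | X ω = 1} := hX (measurableSet_singleton 1)
  have hXind : X = Set.indicator {ω | X ω = 1} (fun _ => (1 : ℝ)) := by
    funext ω
    rcases h01 ω with h | h
    · rw [h, Set.indicator_apply, if_neg]
      simp only [Set.mem_setOf_eq, h]
      norm_num
    · rw [h, Set.indicator_apply, if_pos]
      simpa using h
  have hXint : Integrable X μ := by
    rw [hXind]
    exact (integrable_const (1 : ℝ)).indicator hs
  have hEX : ∫ ω, X ω ∂μ = p := by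
    conv_lhs => rw [hXind]
    rw [integral_indicator_const (1 : ℝ) hs, measureReal_def, hp, ENNReal.toReal_ofReal hp0, smul_eq_mul, mul_one]
  have hexp : (fun ω => exp (t * X ω)) = fun ω => 1 + (exp t - 1) * X ω := by
    funext ω
    rcases h01 ω with h | h <;> rw [h] <;> simp <;> ring
  have hint : Integrable (fun ω => exp (t * X ω)) μ := by
    rw [hexp]
    exact (integrable_const 1).add (hXint.const_mul _)
  refine ⟨hint, ?_⟩
  rw [mgf, hexp, integral_add (integrable_const 1) (hXint.const_mul _), integral_const,
    MeasureTheory.integral_const_mul, hEX]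
  simp only [probReal_univ, measure_univ, ENNReal.toReal_one, smul_eq_mul, mul_one, one_smul]
  ring

end Aux

/-- For the Watts–Strogatz random adjacency matrix `A ~ WS(n,k,β)` with identity
permutation, with probability at least `1 - 1/n`,
`⟨B, A⟩ ≥ (1 - β + β²k/(n-1))·nk - √(nk·log n)`. -/
theorem maxlik_statistic_signal_bound {Ω : Type*} [MeasurableSpace Ω] (μ : Measure Ω)
    [IsProbabilityMeasure μ] (n k : ℕ) (hn : 2 ≤ n) (hk : 0 < k) (hkn : k < n)
    (hke : Even k) (β : ℝ) (hβ0 : 0 ≤ β) (hβ1 : β ≤ 1)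
    (A : Ω → Matrix (Fin n) (Fin n) ℝ)
    (hmeas : ∀ i j, Measurable fun ω => A ω i j)
    (hsymm : ∀ ω, (A ω).IsSymm) (hdiag : ∀ ω i, A ω i i = 0)
    (h01 : ∀ ω i j, A ω i j = 0 ∨ A ω i j = 1)
    (hlattice : ∀ i j : Fin n, i < j → ringLattice n k i j = 1 →
      μ {ω | A ω i j = 1} = ENNReal.ofReal (1 - β + β ^ 2 * k / (n - 1)))
    (hindep : iIndepFun
      (fun (e : {q : Fin n × Fin n // q.1 < q.2}) ω => A ω e.1.1 e.1.2) μ) :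
    ENNReal.ofReal (1 - 1 / (n : ℝ)) ≤
      μ {ω | (1 - β + β ^ 2 * k / (n - 1)) * n * k -
            Real.sqrt ((n : ℝ) * k * Real.log n) ≤
          ∑ i : Fin n, ∑ j : Fin n, ringLattice n k i j * A ω i j} := by
  classical
  have hn0 : (0:ℝ) < n := by exact_mod_cast (by omega : 0 < n)
  have hn2 : (2:ℝ) ≤ n := by exact_mod_cast hn
  have hn1 : (1:ℝ) ≤ (n:ℝ) - 1 := by linarith
  have hk0 : (0:ℝ) < k := by exact_mod_cast hk
  set p : ℝ := 1 - β + β ^ 2 * ↑k / (↑n - 1) with hp_def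
  have hdivnn : 0 ≤ β ^ 2 * ↑k / (↑n - 1) := by positivity
  have hp0 : 0 ≤ p := by rw [hp_def]; linarith
  have hp1 : p ≤ 1 := by
    have hknR : (k:ℝ) ≤ (n:ℝ) - 1 := by
      have : (k:ℝ) + 1 ≤ n := by exact_mod_cast hkn
      linarith
    have hfrac : β ^ 2 * ↑k / (↑n - 1) ≤ β := by
      rw [div_le_iff₀ (by linarith : (0:ℝ) < (n:ℝ) - 1)]
      nlinarith [mul_nonneg hβ0 hk0.le, mul_nonneg (mul_nonneg hβ0 hβ0) hk0.le]
    rw [hp_def]; linarith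
  set E := latticeEdges n k with hE_def
  set m := E.card with hm_def
  have hm2 : 2 * m = n * k := two_mul_latticeEdges_card n k hn hkn hke
  have hnk2 : 2 ≤ n * k := by nlinarith [hn, hk]
  have hmpos : 0 < m := by omega
  have hmR : (2:ℝ) * m = (n:ℝ) * k := by exact_mod_cast hm2
  have hmposR : (0:ℝ) < m := by exact_mod_cast hmpos
  set X : {q : Fin n × Fin n // q.1 < q.2} → Ω → ℝ := fun e ω => A ω e.1.1 e.1.2 with hX_def
  have hXmeas : ∀ e, Measurable (X e) := fun e => hmeas _ _
  have hbern : ∀ e ∈ E, ∀ t : ℝ,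
      Integrable (fun ω => exp (t * X e ω)) μ ∧ mgf (X e) μ t = 1 - p + p * exp t := by
    intro e he t
    apply bernoulli_mgf μ (X e) (hXmeas e) (fun ω => h01 ω _ _) p hp0
    have hcond : 1 ≤ ringDist n e.1.1 e.1.2 ∧ ringDist n e.1.1 e.1.2 ≤ k / 2 := by
      rw [hE_def] at he
      simp only [latticeEdges, Finset.mem_filter, Finset.mem_univ, true_and] at he
      exact he
    have hB : ringLattice n k e.1.1 e.1.2 = 1 := by
      simp [ringLattice, hcond.1, hcond.2]
    exact hlattice e.1.1 e.1.2 e.2 hB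
  set q : ℝ := (n:ℝ) * k * Real.log n with hq_def
  have hlogn : 0 ≤ Real.log n := Real.log_nonneg (by exact_mod_cast (by omega : 1 ≤ n))
  have hq0 : 0 ≤ q := by rw [hq_def]; positivity
  set s : ℝ := Real.sqrt q / 2 with hs_def
  have hs0 : 0 ≤ s := by rw [hs_def]; positivity
  have hs2 : s ^ 2 = q / 4 := by rw [hs_def, div_pow, sq_sqrt hq0]; norm_num
  set t : ℝ := -(4 * s / m) with ht_def
  have ht0 : t ≤ 0 := by
    rw [ht_def]
    have : (0:ℝ) ≤ 4 * s / m := by positivity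
    linarith
  set S := ∑ e ∈ E, X e with hS_def
  have hSint : Integrable (fun ω => exp (t * S ω)) μ :=
    iIndepFun.integrable_exp_mul_sum hindep hXmeas (fun e he => (hbern e he t).1)
  have hbase : (0:ℝ) ≤ 1 - p + p * exp t := by
    have := mul_nonneg hp0 (exp_pos t).le
    linarith
  have hmgf : mgf S μ t ≤ exp (m * (p * t + t ^ 2 / 8)) := by
    rw [hS_def, hindep.mgf_sum hXmeas]
    calc ∏ e ∈ E, mgf (X e) μ t = ∏ _e ∈ E, (1 - p + p * exp t) :=
          Finset.prod_congr rfl (fun e he => (hbern e he t).2)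
      _ = (1 - p + p * exp t) ^ m := by rw [Finset.prod_const, hm_def]
      _ ≤ (exp (p * t + t ^ 2 / 8)) ^ m :=
          pow_le_pow_left₀ hbase (bern_mgf_le p hp0 hp1 t) m
      _ = exp (m * (p * t + t ^ 2 / 8)) := by
          rw [← Real.exp_nat_mul]
  have chern := measure_le_le_exp_mul_mgf (X := S) (μ := μ) (p * m - s) ht0 hSint
  have hexponent : t * s + ↑m * t ^ 2 / 8 = -Real.log ↑n := by
    have hm0 : (m:ℝ) ≠ 0 := hmposR.ne'
    have halg : ∀ sr mr : ℝ, mr ≠ 0 →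
        (-(4 * sr / mr)) * sr + mr * (-(4 * sr / mr)) ^ 2 / 8 = -2 * sr ^ 2 / mr := by
      intro sr mr hmr
      field_simp
      ring
    rw [ht_def, halg s (m:ℝ) hm0, hs2, hq_def, ← hmR]
    field_simp
    ring
  have hbound : (μ {ω | S ω ≤ p * m - s}).toReal ≤ 1 / n := by
    calc (μ {ω | S ω ≤ p * m - s}).toReal
        ≤ exp (-t * (p * m - s)) * mgf S μ t := chern
      _ ≤ exp (-t * (p * m - s)) * exp (m * (p * t + t ^ 2 / 8)) :=
          mul_le_mul_of_nonneg_left hmgf (exp_pos _).le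
      _ = exp (t * s + ↑m * t ^ 2 / 8) := by rw [← exp_add]; ring_nf
      _ = exp (-Real.log ↑n) := by rw [hexponent]
      _ = 1 / n := by rw [Real.exp_neg, Real.exp_log hn0, one_div]
  have hμle : μ {ω | S ω ≤ p * m - s} ≤ ENNReal.ofReal (1 / n) := by
    rw [← ENNReal.ofReal_toReal (measure_ne_top μ {ω | S ω ≤ p * m - s})]
    exact ENNReal.ofReal_le_ofReal hbound
  set Ev := {ω | p * ↑n * ↑k - Real.sqrt (↑n * ↑k * Real.log ↑n) ≤
      ∑ i : Fin n, ∑ j : Fin n, ringLattice n k i j * A ω i j} with hEv_def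
  have hsum_eq : ∀ ω, ∑ i : Fin n, ∑ j : Fin n, ringLattice n k i j * A ω i j = 2 * S ω := by
    intro ω
    rw [sum_lattice_eq n k hn hkn (A ω) (hsymm ω), hS_def, ← hE_def, Finset.sum_apply]
  have hcompl : Evᶜ ⊆ {ω | S ω ≤ p * m - s} := by
    intro ω hω
    simp only [hEv_def, Set.mem_compl_iff, Set.mem_setOf_eq, not_le] at hω
    simp only [Set.mem_setOf_eq]
    rw [hsum_eq ω] at hω
    have hsqrt : Real.sqrt (↑n * ↑k * Real.log ↑n) = 2 * s := by
      rw [hs_def, hq_def]; ring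
    rw [hsqrt] at hω
    have hv : p * ↑n * ↑k = 2 * (p * ↑m) := by linear_combination p * hmR.symm
    generalize S ω = Sw at hω ⊢
    linarith
  have h1 : (1:ENNReal) ≤ μ Ev + μ Evᶜ := by
    rw [← measure_univ (μ := μ), ← Set.union_compl_self Ev]
    exact measure_union_le _ _
  have h2 : μ Evᶜ ≤ ENNReal.ofReal (1 / n) := le_trans (measure_mono hcompl) hμle
  have h3 : (1:ENNReal) ≤ μ Ev + ENNReal.ofReal (1 / n) :=
    h1.trans (add_le_add le_rfl h2)
  have h4 : ENNReal.ofReal (1 - 1 / (n:ℝ)) = 1 - ENNReal.ofReal (1 / (n:ℝ)) := by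
    rw [ENNReal.ofReal_sub _ (by positivity), ENNReal.ofReal_one]
  rw [h4]
  exact tsub_le_iff_right.mpr h3
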